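/- The numerator of the leniency IV estimand admits the pairwise decomposition E[ℓ̈·Y] = Σ_{1≤j<k≤K} E[ p_j(W)·p_k(W)·(ℓ(k, W) − ℓ(j, W))·(μ(k, W) − μ(j, W)) ]. -/

import Mathlib

open MeasureTheory ProbabilityTheory BigOperators

lemma alg_pair {K : ℕ} (p l m : Fin K → ℝ) (hp : ∑ k, p k = 1) :
    ∑ j, ∑ k, (if j < k then p j * p k * (l k - l j) * (m k - m j) else 0)
      = ∑ k, p k * l k * m k - (∑ j, p j * l j) * (∑ k, p k * m k) := by
  set F : Fin K → Fin K → ℝ := fun j k => p j * p k * (l k - l j) * (m k - m j) with hF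
  set B := ∑ k, p k * l k * m k with hB
  set L := ∑ j, p j * l j with hL
  set M := ∑ k, p k * m k with hM
  have hsymm : ∀ j k, F j k = F k j := fun j k => by simp only [hF]; ring
  have htri : ∀ j k : Fin K, F j k = (if j < k then F j k else 0) + (if k < j then F j k else 0) := by
    intro j k
    rcases lt_trichotomy j k with h | h | h
    · simp [h, not_lt_of_gt h]
    · subst h; simp [hF]
    · simp [h, not_lt_of_gt h]
  have hT2 : ∑ j, ∑ k, F j k
      = 2 * ∑ j, ∑ k, (if j < k then F j k else 0) := by
    have h1 : ∑ j, ∑ k, F j k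
        = (∑ j, ∑ k, (if j < k then F j k else 0)) + ∑ j, ∑ k, (if k < j then F j k else 0) := by
      rw [← Finset.sum_add_distrib]
      refine Finset.sum_congr rfl fun j _ => ?_
      rw [← Finset.sum_add_distrib]
      exact Finset.sum_congr rfl fun k _ => htri j k
    have h2 : ∑ j, ∑ k, (if k < j then F j k else 0)
        = ∑ j, ∑ k, (if j < k then F j k else 0) := by
      rw [Finset.sum_comm]
      refine Finset.sum_congr rfl fun j _ => Finset.sum_congr rfl fun k _ => ?_
      rw [hsymm]
    rw [h1, h2]; ring
  have hTval : ∑ j, ∑ k, F j k = 2 * (B - L * M) := by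
    have hinner : ∀ j, ∑ k, F j k
        = p j * B + (p j * l j * m j) * (∑ k, p k) - (p j * l j) * M - (p j * m j) * L := by
      intro j
      have : ∀ k, F j k
          = p j * (p k * l k * m k) + (p j * l j * m j) * p k
            - (p j * l j) * (p k * m k) - (p j * m j) * (p k * l k) := fun k => by
        simp only [hF]; ring
      rw [Finset.sum_congr rfl fun k _ => this k]
      simp only [Finset.sum_sub_distrib, Finset.sum_add_distrib, ← Finset.mul_sum, hB, hM, hL]
    rw [Finset.sum_congr rfl fun j _ => hinner j, hp]
    simp only [Finset.sum_sub_distrib, Finset.sum_add_distrib, ← Finset.sum_mul, ← hB, ← hL, ← hM]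
    rw [hp]; ring
  have := hT2.symm.trans hTval
  linarith

/-- The numerator of the leniency IV estimand admits the pairwise
decomposition
`E[ℓ̈·Y] = Σ_{j<k} E[p_j(W)·p_k(W)·(ℓ(k,W) − ℓ(j,W))·(μ(k,W) − μ(j,W))]`. -/
theorem stmt13
    {Ω : Type*} [MeasurableSpace Ω] (μ : Measure Ω) [IsProbabilityMeasure μ]
    (K : ℕ) (hK : 2 ≤ K)
    (S : Type*) [Fintype S] [MeasurableSpace S] [MeasurableSingletonClass S]
    (κ : Ω → Fin K) (Wc : Ω → S) (hκ : Measurable κ) (hWc : Measurable Wc)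
    (hpos : ∀ (k : Fin K) (w : S), 0 < μ {ω | κ ω = k ∧ Wc ω = w})
    (X Y : Ω → ℝ) (hX : Integrable X μ) (hY : Integrable Y μ)
    (p : Fin K → S → ℝ)
    (hp : ∀ k w, p k w = (μ {ω | κ ω = k ∧ Wc ω = w}).toReal / (μ {ω | Wc ω = w}).toReal)
    (ℓ m : Fin K → S → ℝ)
    (hℓ : ∀ k w, ℓ k w = ∫ ω, X ω ∂(μ[|{ω | κ ω = k ∧ Wc ω = w}]))
    (hm : ∀ k w, m k w = ∫ ω, Y ω ∂(μ[|{ω | κ ω = k ∧ Wc ω = w}]))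
    (ℓdd : Ω → ℝ)
    (hℓdd : ∀ ω, ℓdd ω = ℓ (κ ω) (Wc ω) - ∑ j, p j (Wc ω) * ℓ j (Wc ω)) :
    ∫ ω, ℓdd ω * Y ω ∂μ
      = ∑ j : Fin K, ∑ k : Fin K, if j < k then
          ∫ ω, p j (Wc ω) * p k (Wc ω) * (ℓ k (Wc ω) - ℓ j (Wc ω))
            * (m k (Wc ω) - m j (Wc ω)) ∂μ else 0 := by
  have hK0 : 0 < K := by omega
  haveI : NeZero K := ⟨by omega⟩
  set A : Fin K → S → Set Ω := fun k w => {ω | κ ω = k ∧ Wc ω = w} with hA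
  have hAm : ∀ k w, MeasurableSet (A k w) := fun k w =>
    (hκ (measurableSet_singleton k)).inter (hWc (measurableSet_singleton w))
  have hAfin : ∀ k w, μ (A k w) ≠ ⊤ := fun k w => measure_ne_top μ _
  set q : Fin K → S → ℝ := fun k w => (μ (A k w)).toReal with hq
  have hqpos : ∀ k w, 0 < q k w := fun k w =>
    ENNReal.toReal_pos (hpos k w).ne' (hAfin k w)
  set Q : S → ℝ := fun w => (μ {ω | Wc ω = w}).toReal with hQdef
  -- Q w = ∑ k, q k w
  have hBset : ∀ w : S, {ω | Wc ω = w} = ⋃ k, A k w := by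
    intro w; ext ω
    simp only [Set.mem_setOf_eq, Set.mem_iUnion, hA]
    exact ⟨fun h => ⟨κ ω, rfl, h⟩, fun ⟨k, _, h⟩ => h⟩
  have hdisj : ∀ w, Pairwise (Function.onFun Disjoint fun k => A k w) := by
    intro w k k' hkk'
    rw [Function.onFun, Set.disjoint_left]
    rintro ω ⟨h1, _⟩ ⟨h2, _⟩
    exact hkk' (h1.symm.trans h2)
  have hA' : ∀ k w, {ω | κ ω = k ∧ Wc ω = w} = A k w := fun _ _ => rfl
  have hQ : ∀ w, Q w = ∑ k, q k w := by
    intro w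
    show (μ {ω | Wc ω = w}).toReal = _
    rw [hBset w, measure_iUnion (hdisj w) fun k => hAm k w, tsum_fintype,
      ENNReal.toReal_sum fun k _ => hAfin k w]
  have hQpos : ∀ w, 0 < Q w := fun w => by
    rw [hQ]
    exact Finset.sum_pos (fun k _ => hqpos k w) Finset.univ_nonempty
  -- q k w = Q w * p k w
  have hqQ : ∀ k w, q k w = Q w * p k w := by
    intro k w
    rw [hp k w]
    show q k w = Q w * (q k w / Q w)
    field_simp [(hQpos w).ne']
  have hpsum : ∀ w, ∑ k, p k w = 1 := by
    intro w
    have : ∀ k, p k w = q k w / Q w := fun k => by rw [hqQ k w]; field_simp [(hQpos w).ne']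
    rw [Finset.sum_congr rfl fun k _ => this k, ← Finset.sum_div, ← hQ,
      div_self (hQpos w).ne']
  -- set integral of Y over A k w
  have hYA : ∀ k w, ∫ ω in A k w, Y ω ∂μ = q k w * m k w := by
    intro k w
    have hne : (μ (A k w)).toReal ≠ 0 := (hqpos k w).ne'
    rw [hm k w, ProbabilityTheory.cond, hA', integral_smul_measure, smul_eq_mul,
      ENNReal.toReal_inv]
    show _ = (μ (A k w)).toReal * _
    rw [← mul_assoc, mul_inv_cancel₀ hne, one_mul]
  -- ℓdd is measurable and bounded
  set g : Fin K × S → ℝ := fun pr => ℓ pr.1 pr.2 - ∑ j, p j pr.2 * ℓ j pr.2 with hg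
  have hℓdd' : ℓdd = fun ω => g (κ ω, Wc ω) := funext fun ω => hℓdd ω
  have hℓddMeas : Measurable ℓdd := by
    rw [hℓdd']
    exact (measurable_of_finite g).comp (hκ.prodMk hWc)
  have hℓddBdd : ∃ C, ∀ ω, ‖ℓdd ω‖ ≤ C := by
    refine ⟨∑ pr : Fin K × S, ‖g pr‖, fun ω => ?_⟩
    rw [hℓdd']
    exact Finset.single_le_sum (fun pr _ => norm_nonneg (g pr)) (Finset.mem_univ _)
  have hInt : Integrable (fun ω => ℓdd ω * Y ω) μ :=
    hY.bdd_mul hℓddMeas.aestronglyMeasurable (Filter.Eventually.of_forall hℓddBdd.choose_spec)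
  -- decompose LHS over the partition
  have hcover : (Set.univ : Set Ω) = ⋃ pr : Fin K × S, A pr.1 pr.2 := by
    ext ω
    simp only [Set.mem_univ, Set.mem_iUnion, true_iff, hA]
    exact ⟨(κ ω, Wc ω), rfl, rfl⟩
  have hdisj2 : Pairwise (Function.onFun Disjoint fun pr : Fin K × S => A pr.1 pr.2) := by
    intro pr pr' hne
    rw [Function.onFun, Set.disjoint_left]
    rintro ω ⟨h1, h2⟩ ⟨h3, h4⟩
    exact hne (Prod.ext (h1.symm.trans h3) (h2.symm.trans h4))
  have hLHS : ∫ ω, ℓdd ω * Y ω ∂μ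
      = ∑ pr : Fin K × S, ∫ ω in A pr.1 pr.2, ℓdd ω * Y ω ∂μ := by
    rw [← setIntegral_univ, hcover]
    exact integral_iUnion_fintype (fun pr => hAm pr.1 pr.2) hdisj2
      fun pr => hInt.integrableOn
  have hpiece : ∀ k w, ∫ ω in A k w, ℓdd ω * Y ω ∂μ
      = (ℓ k w - ∑ j, p j w * ℓ j w) * (q k w * m k w) := by
    intro k w
    rw [← hYA k w, ← integral_const_mul]
    refine setIntegral_congr_fun (hAm k w) fun ω hω => ?_
    obtain ⟨h1, h2⟩ := hω
    rw [hℓdd ω, h1, h2]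
  -- RHS pieces: integrals of functions of Wc
  have hWInt : ∀ h : S → ℝ, ∫ ω, h (Wc ω) ∂μ = ∑ w, Q w * h w := by
    intro h
    rw [← integral_map hWc.aemeasurable (measurable_of_finite h).aestronglyMeasurable,
      integral_fintype (Integrable.of_finite)]
    refine Finset.sum_congr rfl fun w _ => ?_
    rw [map_measureReal_apply hWc (measurableSet_singleton w), smul_eq_mul, hQdef]
    rfl
  -- rewrite both sides as sums over w
  have hLHS2 : ∫ ω, ℓdd ω * Y ω ∂μ
      = ∑ w, ∑ k, (ℓ k w - ∑ j, p j w * ℓ j w) * (q k w * m k w) := by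
    rw [hLHS, Fintype.sum_prod_type, Finset.sum_comm]
    refine Finset.sum_congr rfl fun w _ => Finset.sum_congr rfl fun k _ => ?_
    exact hpiece k w
  have hRHS1 : ∀ j k : Fin K,
      (if j < k then
          ∫ ω, p j (Wc ω) * p k (Wc ω) * (ℓ k (Wc ω) - ℓ j (Wc ω))
            * (m k (Wc ω) - m j (Wc ω)) ∂μ else 0)
      = ∑ w, (if j < k then
          Q w * (p j w * p k w * (ℓ k w - ℓ j w) * (m k w - m j w)) else 0) := by
    intro j k
    split
    · exact hWInt (fun w => p j w * p k w * (ℓ k w - ℓ j w) * (m k w - m j w))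
    · simp
  have hRHS2 : (∑ j : Fin K, ∑ k : Fin K, if j < k then
          ∫ ω, p j (Wc ω) * p k (Wc ω) * (ℓ k (Wc ω) - ℓ j (Wc ω))
            * (m k (Wc ω) - m j (Wc ω)) ∂μ else 0)
      = ∑ w, ∑ j : Fin K, ∑ k : Fin K, (if j < k then
          Q w * (p j w * p k w * (ℓ k w - ℓ j w) * (m k w - m j w)) else 0) :=
    calc (∑ j : Fin K, ∑ k : Fin K, if j < k then
          ∫ ω, p j (Wc ω) * p k (Wc ω) * (ℓ k (Wc ω) - ℓ j (Wc ω))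
            * (m k (Wc ω) - m j (Wc ω)) ∂μ else 0)
        = ∑ j : Fin K, ∑ k : Fin K, ∑ w, (if j < k then
            Q w * (p j w * p k w * (ℓ k w - ℓ j w) * (m k w - m j w)) else 0) :=
          Finset.sum_congr rfl fun j _ => Finset.sum_congr rfl fun k _ => hRHS1 j k
      _ = ∑ j : Fin K, ∑ w, ∑ k : Fin K, (if j < k then
            Q w * (p j w * p k w * (ℓ k w - ℓ j w) * (m k w - m j w)) else 0) :=
          Finset.sum_congr rfl fun j _ => Finset.sum_comm
      _ = ∑ w, ∑ j : Fin K, ∑ k : Fin K, (if j < k then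
            Q w * (p j w * p k w * (ℓ k w - ℓ j w) * (m k w - m j w)) else 0) :=
          Finset.sum_comm
  rw [hLHS2, hRHS2]
  refine Finset.sum_congr rfl fun w _ => ?_
  -- per-w algebraic identity
  have key : ∑ j : Fin K, ∑ k : Fin K,
        (if j < k then p j w * p k w * (ℓ k w - ℓ j w) * (m k w - m j w) else 0)
      = ∑ k, p k w * ℓ k w * m k w
        - (∑ j, p j w * ℓ j w) * (∑ k, p k w * m k w) :=
    alg_pair (fun k => p k w) (fun k => ℓ k w) (fun k => m k w) (hpsum w)
  have hL : ∑ k, (ℓ k w - ∑ j, p j w * ℓ j w) * (q k w * m k w)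
      = Q w * ((∑ k, p k w * ℓ k w * m k w)
          - (∑ j, p j w * ℓ j w) * (∑ k, p k w * m k w)) := by
    have hterm : ∀ k : Fin K, (ℓ k w - ∑ j, p j w * ℓ j w) * (q k w * m k w)
        = Q w * (p k w * ℓ k w * m k w)
          - Q w * ((∑ j, p j w * ℓ j w) * (p k w * m k w)) := by
      intro k; rw [hqQ k w]; ring
    rw [Finset.sum_congr rfl fun k _ => hterm k, Finset.sum_sub_distrib,
      ← Finset.mul_sum, ← Finset.mul_sum, ← Finset.mul_sum, ← mul_sub]
  rw [hL, ← key, Finset.mul_sum]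
  refine Finset.sum_congr rfl fun j _ => ?_
  rw [Finset.mul_sum]
  refine Finset.sum_congr rfl fun k _ => ?_
  split <;> simp
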